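/- arXiv:2010.10021 — 5 statements merged into one kernel-verified Lean document; each statement's English description precedes it below -/
import Mathlib

section
/- Let a be a generator of the cyclic group 𝔽₄ˣ. Then the matrices A = [[0,1],[1,a]] and B = [[0,1],[1,a²]] both lie in SL₂(𝔽₄), both have order 5, and they are not conjugate to each other in SL₂(𝔽₄). -/
open Matrix

lemma aux_pow5 {F : Type*} [Field F] (h2 : (2:F) = 0) (t : F) (ht : t^2 = t+1) :
    (!![(0:F),1;1,t])^5 = 1 := by
  rw [show (5:ℕ)=1+1+1+1+1 from rfl]
  simp only [pow_succ, pow_zero, one_mul, Matrix.mul_fin_two, Matrix.one_fin_two]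
  ext i j
  fin_cases i <;> fin_cases j <;> simp <;>
    first
    | linear_combination (t+1)*ht + 2*t*h2
    | linear_combination (t^2+t+5)*ht + (3*t+3)*h2
    | linear_combination (t^3+t^2+6*t+7)*ht + (8*t+3)*h2

lemma aux_order {F : Type*} [Field F] (h2 : (2:F) = 0) (t : F) (ht : t^2 = t+1)
    (M : Matrix.SpecialLinearGroup (Fin 2) F)
    (hM : (M : Matrix (Fin 2) (Fin 2) F) = !![(0:F),1;1,t]) : orderOf M = 5 := by
  haveI : Fact (Nat.Prime 5) := ⟨by norm_num⟩
  refine orderOf_eq_prime ?_ ?_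
  · apply Subtype.coe_injective
    show ((M ^ 5 : Matrix.SpecialLinearGroup (Fin 2) F) : Matrix (Fin 2) (Fin 2) F)
        = ((1 : Matrix.SpecialLinearGroup (Fin 2) F) : Matrix (Fin 2) (Fin 2) F)
    rw [Matrix.SpecialLinearGroup.coe_pow, hM, Matrix.SpecialLinearGroup.coe_one]
    exact aux_pow5 h2 t ht
  · intro h
    have h0 : (M : Matrix (Fin 2) (Fin 2) F) 0 0 = 1 := by
      rw [h]; simp
    rw [hM] at h0
    simp at h0

/-- If `a` generates `𝔽₄ˣ`, then `A = [[0,1],[1,a]]` and `B = [[0,1],[1,a²]]` lie in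
`SL₂(𝔽₄)`, have order 5, and are not conjugate to each other in `SL₂(𝔽₄)`. -/
theorem order_five_classes_in_sl2_F4 (a : (GaloisField 2 2)ˣ)
    (ha : ∀ x : (GaloisField 2 2)ˣ, x ∈ Subgroup.zpowers a) :
    (!![(0 : GaloisField 2 2), 1; 1, (a : GaloisField 2 2)]).det = 1 ∧
    (!![(0 : GaloisField 2 2), 1; 1, (a : GaloisField 2 2) ^ 2]).det = 1 ∧
    ∀ (A B : Matrix.SpecialLinearGroup (Fin 2) (GaloisField 2 2)),
      (A : Matrix (Fin 2) (Fin 2) (GaloisField 2 2))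
          = !![(0 : GaloisField 2 2), 1; 1, (a : GaloisField 2 2)] →
      (B : Matrix (Fin 2) (Fin 2) (GaloisField 2 2))
          = !![(0 : GaloisField 2 2), 1; 1, (a : GaloisField 2 2) ^ 2] →
      orderOf A = 5 ∧ orderOf B = 5 ∧ ¬ IsConj A B := by
  set F := GaloisField 2 2
  have h2 : (2 : F) = 0 := by
    have := CharP.cast_eq_zero F 2
    simpa using this
  set t : F := (a : F) with htdef
  have hcard : Nat.card Fˣ = 3 := by
    rw [Nat.card_units, GaloisField.card 2 2 (by norm_num)]
    norm_num
  have hord : orderOf a = 3 := by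
    rw [orderOf_eq_card_of_forall_mem_zpowers ha, hcard]
  have ha3 : a ^ 3 = 1 := by rw [← hord]; exact pow_orderOf_eq_one a
  have ht3 : t ^ 3 = 1 := by
    have := congrArg (Units.val) ha3
    simpa using this
  have htne1 : t ≠ 1 := by
    intro h
    have h' : (a : F) = 1 := htdef ▸ h
    have : a = 1 := Units.val_eq_one.mp h'
    rw [this] at hord
    simp at hord
  have hquad : t ^ 2 + t + 1 = 0 := by
    have hfac : (t - 1) * (t ^ 2 + t + 1) = 0 := by linear_combination ht3
    rcases mul_eq_zero.mp hfac with h | h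
    · exact absurd (sub_eq_zero.mp h) htne1
    · exact h
  have ht : t ^ 2 = t + 1 := by linear_combination hquad - (t+1)*h2
  have htb : (t ^ 2) ^ 2 = t ^ 2 + 1 := by
    linear_combination t * ht3 + ht + (t - t^2) * h2
  have hdet1 : (!![(0 : F), 1; 1, t]).det = 1 := by
    rw [Matrix.det_fin_two_of]; linear_combination -h2
  have hdet2 : (!![(0 : F), 1; 1, t ^ 2]).det = 1 := by
    rw [Matrix.det_fin_two_of]; linear_combination -h2
  refine ⟨hdet1, hdet2, fun A B hA hB => ⟨aux_order h2 t ht A hA, aux_order h2 (t^2) htb B hB, ?_⟩⟩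
  intro h
  obtain ⟨c, hcc⟩ := isConj_iff.mp h
  have htr : Matrix.trace (B : Matrix (Fin 2) (Fin 2) F)
      = Matrix.trace (A : Matrix (Fin 2) (Fin 2) F) := by
    rw [← hcc]
    simp only [Matrix.SpecialLinearGroup.coe_mul]
    rw [Matrix.trace_mul_cycle]
    have h1 : ((c⁻¹ : Matrix.SpecialLinearGroup (Fin 2) F) : Matrix (Fin 2) (Fin 2) F)
        * (c : Matrix (Fin 2) (Fin 2) F) = 1 := by
      rw [← Matrix.SpecialLinearGroup.coe_mul, inv_mul_cancel]
      rfl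
    rw [h1, one_mul]
  rw [hA, hB, Matrix.trace_fin_two_of, Matrix.trace_fin_two_of, zero_add, zero_add] at htr
  rw [ht] at htr
  have : (1 : F) = 0 := by linear_combination htr
  exact one_ne_zero this
end

section
/- Let H be a subgroup of the symmetric group S₆ which is isomorphic as an abstract group to the symmetric group S₅. Then H acts transitively on the six letters if and only if H contains a permutation of cycle type (3,3) (i.e. a product of two disjoint 3-cycles). -/
open Equiv Equiv.Perm

lemma cycleType_of_prime_order {p : ℕ} (hp : p.Prime) (g : Equiv.Perm (Fin 6))
    (hg : orderOf g = p) : g.cycleType = Multiset.replicate (Multiset.card g.cycleType) p := by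
  apply Multiset.eq_replicate_card.mpr
  intro n hn
  have h2 := Equiv.Perm.two_le_of_mem_cycleType hn
  have hdvd : n ∣ p := by
    rw [← hg, ← Equiv.Perm.lcm_cycleType]; exact Multiset.dvd_lcm hn
  rcases (Nat.Prime.eq_one_or_self_of_dvd hp n hdvd) with h | h
  · omega
  · exact h

lemma cycleType_sum_le (g : Equiv.Perm (Fin 6)) : g.cycleType.sum ≤ 6 := by
  rw [Equiv.Perm.sum_cycleType]
  simpa using Finset.card_le_univ g.support

lemma cycleType_of_order3 (g : Equiv.Perm (Fin 6)) (hg : orderOf g = 3) :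
    g.cycleType = {3} ∨ g.cycleType = {3, 3} := by
  have h := cycleType_of_prime_order (by norm_num) g hg
  have hsum := cycleType_sum_le g
  have hne : g.cycleType ≠ 0 := by
    intro h0
    rw [Equiv.Perm.cycleType_eq_zero] at h0
    rw [h0] at hg; simp at hg
  set c := Multiset.card g.cycleType with hc
  have hcpos : 0 < c := Multiset.card_pos.mpr hne
  rw [h, Multiset.sum_replicate, smul_eq_mul] at hsum
  have hle : c ≤ 2 := by omega
  interval_cases c
  · left; rw [h]; rfl
  · right; rw [h]; rfl

lemma cycleType_of_order5 (g : Equiv.Perm (Fin 6)) (hg : orderOf g = 5) :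
    g.cycleType = {5} := by
  have h := cycleType_of_prime_order (by norm_num) g hg
  have hsum := cycleType_sum_le g
  have hne : g.cycleType ≠ 0 := by
    intro h0
    rw [Equiv.Perm.cycleType_eq_zero] at h0
    rw [h0] at hg; simp at hg
  set c := Multiset.card g.cycleType with hc
  have hcpos : 0 < c := Multiset.card_pos.mpr hne
  rw [h, Multiset.sum_replicate, smul_eq_mul] at hsum
  have hle : c ≤ 1 := by omega
  interval_cases c
  · rw [h]; rfl

/-- A subgroup of `S₆` abstractly isomorphic to `S₅` is transitive on the six letters
iff it contains a permutation of cycle type `(3,3)`. -/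
theorem s5_subgroup_of_s6_transitive_iff_contains_33
    (H : Subgroup (Equiv.Perm (Fin 6)))
    (hiso : Nonempty (H ≃* Equiv.Perm (Fin 5))) :
    (∀ i j : Fin 6, ∃ σ ∈ H, σ i = j) ↔
      ∃ σ ∈ H, Equiv.Perm.cycleType σ = {3, 3} := by
  obtain ⟨e⟩ := hiso
  have hcard : Nat.card H = 120 := by
    rw [Nat.card_congr e.toEquiv, Nat.card_eq_fintype_card]
    simp [Fintype.card_perm, Nat.factorial]
  haveI : Fintype H := Fintype.ofFinite H
  have hcard' : Fintype.card H = 120 := by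
    rw [← Nat.card_eq_fintype_card, hcard]
  constructor
  · intro htrans
    haveI : Fact (Nat.Prime 3) := ⟨by norm_num⟩
    obtain ⟨g, hg⟩ := exists_prime_orderOf_dvd_card (G := H) 3 (by rw [hcard']; norm_num)
    have hog : orderOf (g : Equiv.Perm (Fin 6)) = 3 := by
      rw [Subgroup.orderOf_coe, hg]
    rcases cycleType_of_order3 _ hog with h3 | h33
    · exfalso
      have hsupp : (g : Equiv.Perm (Fin 6)).support.card = 3 := by
        rw [← Equiv.Perm.sum_cycleType, h3]; rfl
      obtain ⟨i, hi⟩ : ∃ i, (g : Equiv.Perm (Fin 6)) i = i := by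
        by_contra hcon
        push_neg at hcon
        have : (g : Equiv.Perm (Fin 6)).support = Finset.univ :=
          Finset.eq_univ_of_forall fun x => Equiv.Perm.mem_support.mpr (hcon x)
        rw [this] at hsupp
        simp at hsupp
      have horb : MulAction.orbit H i = Set.univ := by
        ext j
        simp only [Set.mem_univ, iff_true, MulAction.mem_orbit_iff]
        obtain ⟨σ, hσH, hσ⟩ := htrans i j
        exact ⟨⟨σ, hσH⟩, hσ⟩
      have hidx : (MulAction.stabilizer H i).index = 6 := by
        rw [MulAction.index_stabilizer, horb]
        rw [Set.ncard_univ]; simp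
      have hKcard : Nat.card (MulAction.stabilizer H i) = 20 := by
        have h1 := Subgroup.card_mul_index (MulAction.stabilizer H i)
        rw [hidx, hcard] at h1
        omega
      have hgK : g ∈ MulAction.stabilizer H i := by
        rw [MulAction.mem_stabilizer_iff]
        exact hi
      have hdvd : (3 : ℕ) ∣ 20 := by
        rw [← hKcard, ← hg]
        have : orderOf (⟨g, hgK⟩ : MulAction.stabilizer H i) = orderOf g :=
          Subgroup.orderOf_mk g hgK
        rw [← this]
        exact orderOf_dvd_natCard _
      norm_num at hdvd
    · exact ⟨g, g.2, h33⟩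
  · rintro ⟨σ, hσH, hσ33⟩ i j
    haveI : Fact (Nat.Prime 5) := ⟨by norm_num⟩
    obtain ⟨t, ht⟩ := exists_prime_orderOf_dvd_card (G := H) 5 (by rw [hcard']; norm_num)
    have hot : orderOf (t : Equiv.Perm (Fin 6)) = 5 := by
      rw [Subgroup.orderOf_coe, ht]
    set τ : Equiv.Perm (Fin 6) := (t : Equiv.Perm (Fin 6)) with hτdef
    have ht5 : τ.cycleType = {5} := cycleType_of_order5 _ hot
    have hτc : τ.IsCycle := Equiv.Perm.card_cycleType_eq_one.mp (by rw [ht5]; rfl)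
    have hτsupp : τ.support.card = 5 := by rw [← Equiv.Perm.sum_cycleType, ht5]; rfl
    have hσfix : ∀ x, σ x ≠ x := by
      have h6 : σ.support.card = 6 := by rw [← Equiv.Perm.sum_cycleType, hσ33]; rfl
      have huniv : σ.support = Finset.univ :=
        Finset.eq_univ_of_card _ (by simp [h6])
      intro x
      rw [← Equiv.Perm.mem_support, huniv]
      exact Finset.mem_univ x
    have hA : ∀ x y : Fin 6, τ x ≠ x → τ y ≠ y → ∃ g ∈ H, g x = y := by
      intro x y hx hy
      obtain ⟨n, hn⟩ := hτc.sameCycle hx hy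
      exact ⟨τ ^ n, H.zpow_mem t.2 n, hn⟩
    have huniq : ∀ x y : Fin 6, τ x = x → τ y = y → x = y := by
      intro x y hx hy
      by_contra hxy
      have hsub : τ.support ⊆ ({x, y} : Finset (Fin 6))ᶜ := by
        intro z hz
        simp only [Finset.mem_compl, Finset.mem_insert, Finset.mem_singleton]
        rintro (rfl | rfl)
        · exact Equiv.Perm.mem_support.mp hz hx
        · exact Equiv.Perm.mem_support.mp hz hy
      have hcardle := Finset.card_le_card hsub
      rw [Finset.card_compl, hτsupp] at hcardle
      rw [Finset.card_insert_of_notMem (by simpa using hxy), Finset.card_singleton] at hcardle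
      simp at hcardle
    by_cases hi : τ i = i <;> by_cases hj : τ j = j
    · exact ⟨1, H.one_mem, by rw [huniq i j hi hj]; rfl⟩
    · have hσi : σ i ≠ i := hσfix i
      have hτσi : τ (σ i) ≠ σ i := fun h => hσi (huniq (σ i) i h hi)
      obtain ⟨g, hgH, hgi⟩ := hA (σ i) j hτσi hj
      exact ⟨g * σ, H.mul_mem hgH hσH, by simp [Equiv.Perm.mul_apply, hgi]⟩
    · have hσj : σ j ≠ j := hσfix j
      have hτσj : τ (σ j) ≠ σ j := fun h => hσj (huniq (σ j) j h hj)
      obtain ⟨g, hgH, hgj⟩ := hA (σ j) i hτσj hi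
      refine ⟨(g * σ)⁻¹, H.inv_mem (H.mul_mem hgH hσH), ?_⟩
      have : (g * σ) j = i := by simp [Equiv.Perm.mul_apply, hgj]
      rw [← this]
      simp
    · exact hA i j hi hj
end

section
/- Let H be a subgroup of the symmetric group S₆ which is isomorphic as an abstract group to the symmetric group S₅. If H is not transitive on the six letters, then H has a fixed point: there exists i ∈ Fin 6 such that σ(i) = i for every σ ∈ H. -/
open Equiv MulAction Subgroup

lemma card_s5 : Nat.card (Equiv.Perm (Fin 5)) = 120 := by
  rw [Nat.card_eq_fintype_card, Fintype.card_perm, Fintype.card_fin]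
  decide

lemma alt_le_of_card (N : Subgroup (Equiv.Perm (Fin 5))) [N.Normal]
    (h : 2 < Nat.card N) : alternatingGroup (Fin 5) ≤ N := by
  have hsimp : IsSimpleGroup (alternatingGroup (Fin 5)) := alternatingGroup.isSimpleGroup_five
  rcases hsimp.eq_bot_or_eq_top_of_normal (N.subgroupOf (alternatingGroup (Fin 5)))
      (Subgroup.normal_subgroupOf) with hb | ht
  · exfalso
    have hdisj : Disjoint N (alternatingGroup (Fin 5)) := subgroupOf_eq_bot.mp hb
    have hinj : Function.Injective (Equiv.Perm.sign.domRestrict N) := by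
      rw [← MonoidHom.ker_eq_bot_iff]
      rw [eq_bot_iff]
      intro x hx
      have hx1 : (x : Equiv.Perm (Fin 5)) ∈ alternatingGroup (Fin 5) := by
        simpa [Equiv.Perm.mem_alternatingGroup, Subgroup.mem_subgroupOf, MonoidHom.mem_ker] using hx
      have : (x : Equiv.Perm (Fin 5)) ∈ N ⊓ alternatingGroup (Fin 5) := ⟨x.2, hx1⟩
      rw [hdisj.eq_bot] at this
      rw [Subgroup.mem_bot] at this
      exact Subtype.ext this
    have := Nat.card_le_card_of_injective _ hinj
    simp [Nat.card_eq_fintype_card] at this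
    omega
  · exact subgroupOf_eq_top.mp ht

lemma alt_le_of_index (K : Subgroup (Equiv.Perm (Fin 5)))
    (h2 : 2 ≤ K.index) (h4 : K.index ≤ 4) : alternatingGroup (Fin 5) ≤ K := by
  set G := Equiv.Perm (Fin 5)
  have hN : K.normalCore.Normal := normalCore_normal K
  have hdvd : K.normalCore.index ∣ Nat.factorial K.index := by
    rw [normalCore_eq_ker, Subgroup.index_ker]
    have hd : Nat.card (MulAction.toPermHom G (G ⧸ K)).range ∣ Nat.card (Equiv.Perm (G ⧸ K)) :=
      Subgroup.card_subgroup_dvd_card _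
    have hft : Fintype (G ⧸ K) := Fintype.ofFinite _
    have hde : DecidableEq (G ⧸ K) := Classical.decEq _
    have heq : Nat.card (Equiv.Perm (G ⧸ K)) = K.index.factorial := by
      rw [Nat.card_eq_fintype_card, Fintype.card_perm, ← Nat.card_eq_fintype_card,
        ← Subgroup.index_eq_card]
    rwa [heq] at hd
  have hcard : Nat.card K.normalCore * K.normalCore.index = 120 := by
    rw [Subgroup.card_mul_index]; exact card_s5
  have hle : K.normalCore.index ≤ 24 := by
    refine Nat.le_of_dvd (by norm_num) (hdvd.trans ?_)
    interval_cases h : K.index <;> simp [Nat.factorial] <;> norm_num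
  have : 2 < Nat.card K.normalCore := by
    rcases Nat.eq_zero_or_pos K.normalCore.index with h0 | h0
    · rw [h0, mul_zero] at hcard; exact absurd hcard (by norm_num)
    · nlinarith
  exact (alt_le_of_card K.normalCore this).trans K.normalCore_le

/-- A subgroup of `S₆` abstractly isomorphic to `S₅` that is not transitive on the six
letters has a fixed point. -/
theorem s5_subgroup_of_s6_not_transitive_has_fixed_point
    (H : Subgroup (Equiv.Perm (Fin 6)))
    (hiso : Nonempty (H ≃* Equiv.Perm (Fin 5)))
    (hnt : ¬ ∀ i j : Fin 6, ∃ σ ∈ H, σ i = j) :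
    ∃ i : Fin 6, ∀ σ ∈ H, σ i = i := by
  by_contra hfix
  push_neg at hfix hnt
  obtain ⟨f⟩ := hiso
  obtain ⟨i0, j0, hij⟩ := hnt
  -- no orbit is everything
  have hnotuniv : ∀ i : Fin 6, MulAction.orbit H i ≠ Set.univ := by
    intro i hu
    have hi0 : i0 ∈ MulAction.orbit H i := hu ▸ Set.mem_univ _
    have horb : MulAction.orbit H i0 = MulAction.orbit H i := MulAction.orbit_eq_iff.mpr hi0
    have hj : j0 ∈ MulAction.orbit H i0 := by rw [horb, hu]; exact Set.mem_univ _
    obtain ⟨σ, hσ⟩ := MulAction.mem_orbit_iff.mp hj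
    exact hij σ σ.2 hσ
  -- every orbit has at least 2 elements
  have h2le : ∀ i : Fin 6, 1 < (MulAction.orbit H i).ncard := by
    intro i
    obtain ⟨σ, hσH, hσi⟩ := hfix i
    rw [Set.one_lt_ncard (Set.toFinite _)]
    exact ⟨(⟨σ, hσH⟩ : H) • i, MulAction.mem_orbit i _, i, MulAction.mem_orbit_self i, hσi⟩
  -- every orbit has at most 5 elements
  have h5le : ∀ i : Fin 6, (MulAction.orbit H i).ncard ≤ 5 := by
    intro i
    by_contra h
    push_neg at h
    have h6 : (6 : ℕ) ≤ (MulAction.orbit H i).ncard := h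
    have : (MulAction.orbit H i) = Set.univ := by
      apply Set.eq_of_subset_of_ncard_le (Set.subset_univ _)
      · rwa [Set.ncard_univ, Nat.card_eq_fintype_card, Fintype.card_fin]
    exact hnotuniv i this
  -- no orbit has exactly 5 elements
  have hne5 : ∀ i : Fin 6, (MulAction.orbit H i).ncard ≠ 5 := by
    intro i h5
    have hcompl : (MulAction.orbit H i)ᶜ.ncard = 1 := by
      have := Set.ncard_add_ncard_compl (MulAction.orbit H i)
      rw [Nat.card_eq_fintype_card, Fintype.card_fin, h5] at this
      omega
    obtain ⟨j, hj⟩ := Set.ncard_eq_one.mp hcompl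
    obtain ⟨σ, hσH, hσj⟩ := hfix j
    have hjc : j ∈ (MulAction.orbit H i)ᶜ := by rw [hj]; exact rfl
    have hmem : (⟨σ, hσH⟩ : H) • j ∈ (MulAction.orbit H i)ᶜ := by
      intro hin
      apply hjc
      have := MulAction.orbit_smul (⟨σ, hσH⟩ : H) j
      have hj2 : j ∈ MulAction.orbit H ((⟨σ, hσH⟩ : H) • j) := by
        rw [this]; exact MulAction.mem_orbit_self j
      have := MulAction.orbit_eq_iff.mpr hin
      rw [← this]
      exact hj2
    rw [hj] at hmem
    exact hσj hmem
  -- a nontrivial element of the alternating group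
  obtain ⟨x, hx⟩ := exists_ne (1 : alternatingGroup (Fin 5))
  set τ : H := f.symm ((x : Equiv.Perm (Fin 5)) : Equiv.Perm (Fin 5)) with hτ
  have hτne : τ ≠ 1 := by
    intro h
    apply hx
    have : (x : Equiv.Perm (Fin 5)) = 1 := by
      have := congrArg f h
      rwa [MulEquiv.apply_symm_apply, map_one] at this
    exact Subtype.ext this
  -- τ fixes every point
  have hτfix : ∀ i : Fin 6, τ • i = i := by
    intro i
    set S := MulAction.stabilizer H i
    have hSidx : S.index = (MulAction.orbit H i).ncard := MulAction.index_stabilizer H i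
    set L := S.map f.toMonoidHom with hL
    have hker : (f.toMonoidHom : H →* Equiv.Perm (Fin 5)).ker = ⊥ := by
      rw [MonoidHom.ker_eq_bot_iff]; exact f.injective
    have hrange : (f.toMonoidHom : H →* Equiv.Perm (Fin 5)).range = ⊤ :=
      MonoidHom.range_eq_top_of_surjective _ f.surjective
    have hLidx : L.index = S.index := by
      rw [hL, Subgroup.index_map, hker, hrange, sup_bot_eq, Subgroup.index_top, mul_one]
    have h2 : 2 ≤ L.index := by
      rw [hLidx, hSidx]; exact h2le i
    have h4 : L.index ≤ 4 := by
      rw [hLidx, hSidx]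
      have := h5le i
      have := hne5 i
      omega
    have halt : alternatingGroup (Fin 5) ≤ L := alt_le_of_index L h2 h4
    have hxL : (x : Equiv.Perm (Fin 5)) ∈ L := halt x.2
    obtain ⟨s, hsS, hfs⟩ := hxL
    have : s = τ := by
      apply f.injective
      rw [hτ, MulEquiv.apply_symm_apply]
      exact hfs
    rw [← this]
    exact hsS
  apply hτne
  have hperm : (τ : Equiv.Perm (Fin 6)) = 1 := Equiv.ext fun i => hτfix i
  exact Subtype.ext hperm
end

section
/- Let H be a subgroup of Sp₄(𝔽₂) which is isomorphic as an abstract group to S₅. Then exactly one of the following holds: every element of H of order 3 or of order 6 has matrix trace 0, or every element of H of order 3 or of order 6 has matrix trace 1. -/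
open Matrix

lemma cycleType_three (σ : Equiv.Perm (Fin 5)) (h : orderOf σ = 3) :
    σ.cycleType = {3} := by
  have hl : σ.cycleType.lcm = 3 := by rw [Equiv.Perm.lcm_cycleType, h]
  have hall : ∀ a ∈ σ.cycleType, a = 3 := by
    intro a ha
    have h2 := Equiv.Perm.two_le_of_mem_cycleType ha
    have hd : a ∣ 3 := hl ▸ Multiset.dvd_lcm ha
    rcases (Nat.prime_three).eq_one_or_self_of_dvd a hd with h1 | h1 <;> omega
  have hsum : σ.cycleType.sum ≤ 5 := by
    rw [Equiv.Perm.sum_cycleType]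
    simpa using (σ.support.card_le_univ)
  have hne : σ.cycleType ≠ 0 := by
    intro h0
    rw [Equiv.Perm.cycleType_eq_zero] at h0
    rw [h0, orderOf_one] at h; omega
  have hrep : σ.cycleType = Multiset.replicate (Multiset.card σ.cycleType) 3 :=
    (Multiset.eq_replicate).2 ⟨rfl, hall⟩
  have hs : σ.cycleType.sum = Multiset.card σ.cycleType * 3 := by
    rw [hrep, Multiset.sum_replicate]; simp [mul_comm]
  have hc0 : Multiset.card σ.cycleType ≠ 0 := by
    simpa using hne
  have hc1 : Multiset.card σ.cycleType = 1 := by omega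
  rw [hrep, hc1]; rfl

lemma isConj_three {σ τ : Equiv.Perm (Fin 5)} (hσ : orderOf σ = 3) (hτ : orderOf τ = 3) :
    IsConj σ τ := by
  rw [Equiv.Perm.isConj_iff_cycleType_eq, cycleType_three σ hσ, cycleType_three τ hτ]

lemma trace_sq (M : Matrix (Fin 2 ⊕ Fin 2) (Fin 2 ⊕ Fin 2) (ZMod 2)) :
    trace (M * M) = trace M := by
  have := ZMod.trace_pow_card (p := 2) M
  rw [pow_two, pow_two] at this
  rw [this, ← pow_two, ZMod.pow_card]

lemma trace_isConj {A B : Matrix (Fin 2 ⊕ Fin 2) (Fin 2 ⊕ Fin 2) (ZMod 2)}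
    (h : IsConj A B) : trace A = trace B := by
  obtain ⟨u, hu⟩ := h
  have h2 : (u : Matrix _ _ _) * A = B * (u : Matrix _ _ _) := hu
  calc trace A = trace ((↑u⁻¹ : Matrix _ _ _) * (↑u * A)) := by
        rw [← mul_assoc, Units.inv_mul, one_mul]
    _ = trace ((↑u⁻¹ : Matrix _ _ _) * (B * ↑u)) := by rw [h2]
    _ = trace (B * ↑u * ↑u⁻¹) := by rw [trace_mul_comm]
    _ = trace B := by rw [mul_assoc, Units.mul_inv, mul_one]

set_option maxHeartbeats 1000000 in
/-- For a subgroup `H` of `Sp₄(𝔽₂)` abstractly isomorphic to `S₅`, exactly one of the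
following holds: all elements of `H` of order 3 or 6 have trace 0, or all elements of `H`
of order 3 or 6 have trace 1.  (These are the two types `S₅(a)` and `S₅(b)`.) -/
theorem s5_subgroup_of_sp4_trace_dichotomy
    (H : Subgroup (Matrix.symplecticGroup (Fin 2) (ZMod 2)))
    (hiso : Nonempty (H ≃* Equiv.Perm (Fin 5))) :
    Xor'
      (∀ X : Matrix.symplecticGroup (Fin 2) (ZMod 2), X ∈ H →
        (orderOf X = 3 ∨ orderOf X = 6) →
        Matrix.trace (X : Matrix (Fin 2 ⊕ Fin 2) (Fin 2 ⊕ Fin 2) (ZMod 2)) = 0)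
      (∀ X : Matrix.symplecticGroup (Fin 2) (ZMod 2), X ∈ H →
        (orderOf X = 3 ∨ orderOf X = 6) →
        Matrix.trace (X : Matrix (Fin 2 ⊕ Fin 2) (Fin 2 ⊕ Fin 2) (ZMod 2)) = 1) := by
  obtain ⟨e⟩ := hiso
  set Sp := Matrix.symplecticGroup (Fin 2) (ZMod 2)
  -- trace of elements of H, via coercion to matrices
  let tr : H → ZMod 2 := fun x => Matrix.trace ((x : Sp) : Matrix (Fin 2 ⊕ Fin 2) (Fin 2 ⊕ Fin 2) (ZMod 2))
  -- all order-3 elements of H have equal trace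
  have key : ∀ x y : H, orderOf x = 3 → orderOf y = 3 → tr x = tr y := by
    intro x y hx hy
    have hc : IsConj (e x) (e y) :=
      isConj_three (by rw [e.orderOf_eq, hx]) (by rw [e.orderOf_eq, hy])
    have hc2 : IsConj x y := by
      have := e.symm.toMonoidHom.map_isConj hc
      simpa using this
    have hc3 : IsConj (x : Sp) (y : Sp) := H.subtype.map_isConj hc2
    have hc4 : IsConj ((x : Sp) : Matrix (Fin 2 ⊕ Fin 2) (Fin 2 ⊕ Fin 2) (ZMod 2))
        ((y : Sp) : Matrix (Fin 2 ⊕ Fin 2) (Fin 2 ⊕ Fin 2) (ZMod 2)) :=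
      (Matrix.symplecticGroup (Fin 2) (ZMod 2)).subtype.map_isConj hc3
    exact trace_isConj hc4
  -- a fixed order-3 element of H
  have hσ : orderOf (Equiv.swap (0 : Fin 5) 1 * Equiv.swap 1 2) = 3 :=
    orderOf_eq_prime (by decide) (by decide)
  set x₀ : H := e.symm (Equiv.swap (0 : Fin 5) 1 * Equiv.swap 1 2) with hx₀def
  have hx₀ : orderOf x₀ = 3 := by
    rw [hx₀def, e.symm.orderOf_eq]
    exact hσ
  set t := tr x₀ with ht
  -- every order 3 or 6 element of H has trace t
  have main : ∀ X : Sp, X ∈ H → (orderOf X = 3 ∨ orderOf X = 6) →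
      Matrix.trace (X : Matrix (Fin 2 ⊕ Fin 2) (Fin 2 ⊕ Fin 2) (ZMod 2)) = t := by
    intro X hX hord
    set x : H := ⟨X, hX⟩ with hxdef
    have hox : orderOf x = orderOf X := (orderOf_injective H.subtype Subtype.coe_injective x).symm
    rcases hord with h3 | h6
    · exact key x x₀ (by rw [hox, h3]) hx₀
    · have h2 : orderOf (x ^ 2) = 3 := by
        rw [orderOf_pow, hox, h6]
        rfl
      have := key (x ^ 2) x₀ h2 hx₀
      have hco : ((((x ^ 2 : H) : Sp)) : Matrix (Fin 2 ⊕ Fin 2) (Fin 2 ⊕ Fin 2) (ZMod 2))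
          = (X : Matrix (Fin 2 ⊕ Fin 2) (Fin 2 ⊕ Fin 2) (ZMod 2))
            * (X : Matrix (Fin 2 ⊕ Fin 2) (Fin 2 ⊕ Fin 2) (ZMod 2)) := by
        push_cast [pow_two]
        rfl
      calc Matrix.trace (X : Matrix (Fin 2 ⊕ Fin 2) (Fin 2 ⊕ Fin 2) (ZMod 2))
          = Matrix.trace ((X : Matrix (Fin 2 ⊕ Fin 2) (Fin 2 ⊕ Fin 2) (ZMod 2))
            * (X : Matrix (Fin 2 ⊕ Fin 2) (Fin 2 ⊕ Fin 2) (ZMod 2))) := (trace_sq _).symm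
        _ = t := by rw [← hco]; exact this
  -- x₀ itself is an order-3 element of H
  have hX₀mem : (x₀ : Sp) ∈ H := x₀.2
  have hX₀ord : orderOf ((x₀ : Sp)) = 3 := by
    rw [← hx₀]
    exact orderOf_injective H.subtype Subtype.coe_injective x₀
  have ht01 : t = 0 ∨ t = 1 := by
    have h2 : ∀ a : ZMod 2, a = 0 ∨ a = 1 := by decide
    exact h2 t
  rcases ht01 with h0 | h1
  · left
    constructor
    · intro X hX hord; rw [main X hX hord, h0]
    · intro hP1
      have := hP1 (x₀ : Sp) hX₀mem (Or.inl hX₀ord)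
      rw [show Matrix.trace (((x₀ : Sp)) : Matrix (Fin 2 ⊕ Fin 2) (Fin 2 ⊕ Fin 2) (ZMod 2)) = t from rfl] at this
      rw [h0] at this
      exact absurd this (by decide)
  · right
    constructor
    · intro X hX hord; rw [main X hX hord, h1]
    · intro hP0
      have := hP0 (x₀ : Sp) hX₀mem (Or.inl hX₀ord)
      rw [show Matrix.trace (((x₀ : Sp)) : Matrix (Fin 2 ⊕ Fin 2) (Fin 2 ⊕ Fin 2) (ZMod 2)) = t from rfl] at this
      rw [h1] at this
      exact absurd this (by decide)
end

section
/- Over 𝔽₂, consider the matrices J = [[0,0,0,1],[0,0,1,0],[0,1,0,0],[1,0,0,0]] and M = [[0,1,0,0],[1,0,0,0],[0,0,0,1],[0,0,1,0]]. Then J and M are conjugate in GL₄(𝔽₂) (there exists P ∈ GL₄(𝔽₂) with P·J·P⁻¹ = M), but they are not conjugate by any element of the symplectic group Sp₄(𝔽₂) defined by the form J (there is no P with ᵀP·J·P = J and P·J·P⁻¹ = M). -/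
open Matrix

/-- `J = [[0,s],[s,0]]` with `s = [[0,1],[1,0]]`, over `𝔽₂`. -/
def Jmat : Matrix (Fin 4) (Fin 4) (ZMod 2) :=
  !![0, 0, 0, 1; 0, 0, 1, 0; 0, 1, 0, 0; 1, 0, 0, 0]

/-- `M = diag(s,s)` with `s = [[0,1],[1,0]]`, over `𝔽₂`. -/
def Mmat : Matrix (Fin 4) (Fin 4) (ZMod 2) :=
  !![0, 1, 0, 0; 1, 0, 0, 0; 0, 0, 0, 1; 0, 0, 1, 0]

def Pmat : Matrix (Fin 4) (Fin 4) (ZMod 2) :=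
  !![1,0,0,0; 0,0,0,1; 0,1,0,0; 0,0,1,0]
def Qmat : Matrix (Fin 4) (Fin 4) (ZMod 2) := Pmat.transpose

lemma hPQ : Pmat * Qmat = 1 := by decide
lemma hQP : Qmat * Pmat = 1 := by decide

def Pgl : GL (Fin 4) (ZMod 2) := ⟨Pmat, Qmat, hPQ, hQP⟩

lemma JJ : Jmat * Jmat = 1 := by decide

/-- `J` and `M` are conjugate in `GL₄(𝔽₂)` but not conjugate by any element of the symplectic
group `Sp₄(𝔽₂)` defined by the form `J`. -/
theorem J_M_conjugate_in_GL4_not_in_Sp4 :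
    (∃ P : GL (Fin 4) (ZMod 2),
      (P : Matrix (Fin 4) (Fin 4) (ZMod 2)) * Jmat * ((P⁻¹ : GL (Fin 4) (ZMod 2)) :
        Matrix (Fin 4) (Fin 4) (ZMod 2)) = Mmat) ∧
    ¬ ∃ P : GL (Fin 4) (ZMod 2),
      (P : Matrix (Fin 4) (Fin 4) (ZMod 2))ᵀ * Jmat * (P : Matrix (Fin 4) (Fin 4) (ZMod 2))
          = Jmat ∧
      (P : Matrix (Fin 4) (Fin 4) (ZMod 2)) * Jmat * ((P⁻¹ : GL (Fin 4) (ZMod 2)) :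
        Matrix (Fin 4) (Fin 4) (ZMod 2)) = Mmat := by
  constructor
  · refine ⟨Pgl, ?_⟩
    have h : ((Pgl⁻¹ : GL (Fin 4) (ZMod 2)) : Matrix (Fin 4) (Fin 4) (ZMod 2)) = Qmat := rfl
    rw [h]
    decide
  · rintro ⟨P, h1, h2⟩
    set A : Matrix (Fin 4) (Fin 4) (ZMod 2) := (P : Matrix (Fin 4) (Fin 4) (ZMod 2)) with hA
    have hAinv : A * ((P⁻¹ : GL (Fin 4) (ZMod 2)) : Matrix (Fin 4) (Fin 4) (ZMod 2)) = 1 := by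
      rw [hA]; exact_mod_cast P.mul_inv
    have hinvA : ((P⁻¹ : GL (Fin 4) (ZMod 2)) : Matrix (Fin 4) (Fin 4) (ZMod 2)) * A = 1 := by
      rw [hA]; exact_mod_cast P.inv_mul
    -- P⁻¹ = J Aᵀ J
    have hl : (Jmat * Aᵀ * Jmat) * A = 1 := by
      calc (Jmat * Aᵀ * Jmat) * A = Jmat * (Aᵀ * Jmat * A) := by
            simp only [mul_assoc]
      _ = Jmat * Jmat := by rw [h1]
      _ = 1 := JJ
    have hinv : ((P⁻¹ : GL (Fin 4) (ZMod 2)) : Matrix (Fin 4) (Fin 4) (ZMod 2))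
        = Jmat * Aᵀ * Jmat := by
      calc ((P⁻¹ : GL (Fin 4) (ZMod 2)) : Matrix (Fin 4) (Fin 4) (ZMod 2))
          = 1 * ((P⁻¹ : GL (Fin 4) (ZMod 2)) : Matrix (Fin 4) (Fin 4) (ZMod 2)) := (one_mul _).symm
      _ = ((Jmat * Aᵀ * Jmat) * A) * ((P⁻¹ : GL (Fin 4) (ZMod 2)) :
            Matrix (Fin 4) (Fin 4) (ZMod 2)) := by rw [hl]
      _ = (Jmat * Aᵀ * Jmat) * (A * ((P⁻¹ : GL (Fin 4) (ZMod 2)) :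
            Matrix (Fin 4) (Fin 4) (ZMod 2))) := by rw [mul_assoc]
      _ = Jmat * Aᵀ * Jmat := by rw [hAinv, mul_one]
    have hK : A * Aᵀ = Mmat * Jmat := by
      have h2' : A * Jmat * (Jmat * Aᵀ * Jmat) = Mmat := by rw [← hinv]; exact h2
      have hh : A * Aᵀ * Jmat = Mmat := by
        calc A * Aᵀ * Jmat = A * (1 * (Aᵀ * Jmat)) := by simp only [mul_assoc, one_mul]
        _ = A * (Jmat * Jmat * (Aᵀ * Jmat)) := by rw [JJ]
        _ = A * Jmat * (Jmat * Aᵀ * Jmat) := by simp only [mul_assoc]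
        _ = Mmat := h2'
      calc A * Aᵀ = A * Aᵀ * (Jmat * Jmat) := by rw [JJ, mul_one]
      _ = (A * Aᵀ * Jmat) * Jmat := by simp only [mul_assoc]
      _ = Mmat * Jmat := by rw [hh]
    have hd : ∀ i, (Mmat * Jmat) i i = 0 := by decide
    have hrow : ∀ i, ∑ j, A i j = 0 := by
      intro i
      have hKi := congrFun (congrFun hK i) i
      rw [Matrix.mul_apply, hd i] at hKi
      calc ∑ j, A i j = ∑ j, A i j * Aᵀ j i := by
            refine Finset.sum_congr rfl (fun j _ => ?_)
            rw [Matrix.transpose_apply]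
            have h22 : ∀ a : ZMod 2, a = a * a := by decide
            exact h22 _
      _ = 0 := hKi
    have hmv : A *ᵥ (fun _ => (1 : ZMod 2)) = 0 := by
      funext i
      simp only [Matrix.mulVec, dotProduct, mul_one]
      exact hrow i
    have hcon : (fun _ => (1 : ZMod 2)) = (0 : Fin 4 → ZMod 2) := by
      calc (fun _ => (1 : ZMod 2)) = (1 : Matrix (Fin 4) (Fin 4) (ZMod 2)) *ᵥ (fun _ => 1) := by
            rw [Matrix.one_mulVec]
      _ = (((P⁻¹ : GL (Fin 4) (ZMod 2)) : Matrix (Fin 4) (Fin 4) (ZMod 2)) * A) *ᵥ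
            (fun _ => 1) := by rw [hinvA]
      _ = ((P⁻¹ : GL (Fin 4) (ZMod 2)) : Matrix (Fin 4) (Fin 4) (ZMod 2)) *ᵥ
            (A *ᵥ (fun _ => 1)) := (Matrix.mulVec_mulVec _ _ _).symm
      _ = ((P⁻¹ : GL (Fin 4) (ZMod 2)) : Matrix (Fin 4) (Fin 4) (ZMod 2)) *ᵥ
            (0 : Fin 4 → ZMod 2) := by rw [hmv]
      _ = 0 := Matrix.mulVec_zero _
    have h01 := congrFun hcon 0
    simp at h01
end
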